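/- Let p ≥ 3 be an odd natural number, μ ≥ 0, α > 0, Δt > 0, and let x, y : ℕ → ℝ be sequences satisfying the difference scheme (x^{(n+1)} - x^{(n)})/Δt = (1/2)(y^{(n+1)} + y^{(n)}) and (y^{(n+1)} - y^{(n)})/Δt = -(α/(p+1)) Σ_{l=0}^{p} (x^{(n+1)})^{p-l} (x^{(n)})^{l} - (μ/2)(y^{(n+1)} + y^{(n)}) for all n. Define the discrete energy E^{(n)} := (1/2)(y^{(n)})² + (α/(p+1))(x^{(n)})^{p+1}. Then for each n, (E^{(n+1)} - E^{(n)})/Δt + (μ/4)(y^{(n+1)} + y^{(n)})² = 0. -/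
import Mathlib

lemma key_geom (a b : ℝ) (p : ℕ) :
    (∑ l ∈ Finset.range (p+1), a^(p-l)*b^l) * (a - b) = a^(p+1) - b^(p+1) := by
  have h := geom_sum₂_mul b a (p+1)
  have hs : (∑ l ∈ Finset.range (p+1), a^(p-l)*b^l)
      = ∑ i ∈ Finset.range (p+1), b^i * a^(p+1-1-i) := by
    apply Finset.sum_congr rfl
    intro i hi
    simp [mul_comm]
  rw [hs]
  linear_combination -h


/-- Discrete energy dissipation law for the
structure-preserving difference scheme:
`(E^(n+1) - E^(n))/Δt + (μ/4)(y^(n+1) + y^(n))² = 0`, where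
`E^(n) = (1/2)(y^(n))² + (α/(p+1))(x^(n))^(p+1)`. -/
theorem discrete_energy_dissipation_step
    (p : ℕ) (hp : 3 ≤ p) (hodd : Odd p)
    (μ α Δt : ℝ) (hμ : 0 ≤ μ) (hα : 0 < α) (hΔt : 0 < Δt)
    (x y : ℕ → ℝ)
    (hx : ∀ n : ℕ, (x (n + 1) - x n) / Δt = (1/2) * (y (n + 1) + y n))
    (hy : ∀ n : ℕ, (y (n + 1) - y n) / Δt =
      -(α / ((p : ℝ) + 1)) * (∑ l ∈ Finset.range (p + 1),
        x (n + 1) ^ (p - l) * x n ^ l)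
      - (μ/2) * (y (n + 1) + y n)) :
    ∀ n : ℕ,
      (((1/2) * y (n + 1) ^ 2 + (α / ((p : ℝ) + 1)) * x (n + 1) ^ (p + 1))
        - ((1/2) * y n ^ 2 + (α / ((p : ℝ) + 1)) * x n ^ (p + 1))) / Δt
      + (μ/4) * (y (n + 1) + y n) ^ 2 = 0 := by
  intro n
  have hΔ : Δt ≠ 0 := hΔt.ne'
  set S := ∑ l ∈ Finset.range (p + 1), x (n + 1) ^ (p - l) * x n ^ l with hS
  have key := key_geom (x (n+1)) (x n) p
  have h1 : x (n+1) - x n = (1/2) * (y (n+1) + y n) * Δt :=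
    (div_eq_iff hΔ).mp (hx n)
  have h2 : y (n+1) - y n =
      (-(α / ((p : ℝ) + 1)) * S - (μ/2) * (y (n+1) + y n)) * Δt :=
    (div_eq_iff hΔ).mp (hy n)
  have main : (((1/2) * y (n + 1) ^ 2 + (α / ((p : ℝ) + 1)) * x (n + 1) ^ (p + 1))
        - ((1/2) * y n ^ 2 + (α / ((p : ℝ) + 1)) * x n ^ (p + 1)))
      + Δt * ((μ/4) * (y (n + 1) + y n) ^ 2) = 0 := by
    linear_combination (-(α / ((p : ℝ) + 1))) * key
      + (α / ((p : ℝ) + 1)) * S * h1 + (1/2) * (y (n+1) + y n) * h2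
  have h3 : ((1/2) * y (n + 1) ^ 2 + (α / ((p : ℝ) + 1)) * x (n + 1) ^ (p + 1))
        - ((1/2) * y n ^ 2 + (α / ((p : ℝ) + 1)) * x n ^ (p + 1))
      = Δt * (-((μ/4) * (y (n + 1) + y n) ^ 2)) := by linarith
  rw [h3, mul_comm, mul_div_assoc, div_self hΔ, mul_one]
  ring
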